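/- (One-step network descent inequality.) Let m, d ≥ 1; for i = 1,…,m let f_i : ℝ^d → ℝ be differentiable with L_i-Lipschitz gradient, set L := (1/m)∑_i L_i and f := (1/m)∑_i f_i; let r : ℝ^d → ℝ be convex and u := f + r. Let W = (w_ij) be an m×m doubly stochastic matrix with nonnegative entries, and set w_mx := ∑_{i=1}^m max_j w_ij. Let α > 0, ξ > 0, and let x_1,…,x_m, y_1,…,y_m ∈ ℝ^d; for each i let x_i^{1/2} be a global minimizer over ℝ^d of z ↦ r(z) + (1/(2α))‖z − (x_i − α y_i)‖², and set x_i⁺ := ∑_{j=1}^m w_ij x_j^{1/2}. Let x̄ := (1/m)∑_i x_i and ȳ := (1/m)∑_i y_i. Then ∑_{i=1}^m u(x_i⁺) ≤ ∑_{i=1}^m u(x_i) − (1/α − L/2 − ξ/2)·∑_{i=1}^m ‖x_i^{1/2} − x_i‖² + (1/(2ξ))·∑_{i=1}^m ‖∇f(x_i) − y_i‖² + 4·L·w_mx·( ∑_{i=1}^m ‖x_i − x̄‖² + α²·∑_{i=1}^m ‖y_i − ȳ‖² ). -/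

import Mathlib

open Finset
open scoped RealInnerProductSpace

variable {F : Type*} [NormedAddCommGroup F] [InnerProductSpace ℝ F]

section descent
variable [CompleteSpace F]

/-- Chain rule along a segment. -/
lemma seg_hasDerivAt (g : F → ℝ) (G : F → F) (hG : ∀ z, HasGradientAt g (G z) z)
    (a v : F) (t : ℝ) :
    HasDerivAt (fun s : ℝ => g (a + s • v)) ⟪G (a + t • v), v⟫ t := by
  have hc : HasDerivAt (fun s : ℝ => a + s • v) v t := by
    simpa using ((hasDerivAt_id t).smul_const v).const_add a
  have hf : HasFDerivAt g (InnerProductSpace.toDual ℝ F (G (a + t • v))) (a + t • v) :=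
    (hasGradientAt_iff_hasFDerivAt.1 (hG (a + t • v)))
  have h := hf.comp_hasDerivAt t hc
  rw [InnerProductSpace.toDual_apply_apply] at h
  exact h

lemma descent_upper (g : F → ℝ) (G : F → F) (Lg : ℝ)
    (hG : ∀ z, HasGradientAt g (G z) z)
    (hlip : ∀ a b, ‖G a - G b‖ ≤ Lg * ‖a - b‖) (a b : F) :
    g b ≤ g a + ⟪G a, b - a⟫ + Lg / 2 * ‖b - a‖ ^ 2 := by
  set v := b - a with hv
  set ψ : ℝ → ℝ := fun t => g (a + t • v) - t * ⟪G a, v⟫ - Lg / 2 * t ^ 2 * ‖v‖ ^ 2 with hψ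
  have hder : ∀ t : ℝ, HasDerivAt ψ
      (⟪G (a + t • v), v⟫ - ⟪G a, v⟫ - Lg * t * ‖v‖ ^ 2) t := by
    intro t
    have h1 := seg_hasDerivAt g G hG a v t
    have h2 : HasDerivAt (fun t : ℝ => t * ⟪G a, v⟫) ⟪G a, v⟫ t := by
      simpa using (hasDerivAt_id t).mul_const ⟪G a, v⟫
    have h3 : HasDerivAt (fun t : ℝ => Lg / 2 * t ^ 2 * ‖v‖ ^ 2) (Lg * t * ‖v‖ ^ 2) t := by
      have := ((hasDerivAt_pow 2 t).const_mul (Lg / 2)).mul_const (‖v‖ ^ 2)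
      refine this.congr_deriv ?_
      rw [show (2:ℕ) - 1 = 1 from rfl, pow_one]
      push_cast
      ring
    exact (h1.sub h2).sub h3
  have hanti : AntitoneOn ψ (Set.Icc (0:ℝ) 1) := by
    apply antitoneOn_of_deriv_nonpos (convex_Icc 0 1)
    · exact fun t _ => ((hder t).continuousAt).continuousWithinAt
    · intro t ht
      exact ((hder t).differentiableAt).differentiableWithinAt
    · intro t ht
      rw [interior_Icc] at ht
      rw [(hder t).deriv]
      have h4 : ⟪G (a + t • v) - G a, v⟫ ≤ Lg * t * ‖v‖ ^ 2 := by
        calc ⟪G (a + t • v) - G a, v⟫ ≤ ‖G (a + t • v) - G a‖ * ‖v‖ :=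
              real_inner_le_norm _ _
          _ ≤ (Lg * ‖(a + t • v) - a‖) * ‖v‖ := by
              have := hlip (a + t • v) a
              nlinarith [norm_nonneg v]
          _ = Lg * t * ‖v‖ ^ 2 := by
              rw [add_sub_cancel_left, norm_smul]
              rw [Real.norm_eq_abs, abs_of_pos ht.1]
              ring
      rw [inner_sub_left] at h4
      linarith
  have h01 := hanti (Set.mem_Icc.2 ⟨le_refl 0, zero_le_one⟩)
      (Set.mem_Icc.2 ⟨zero_le_one, le_refl 1⟩) zero_le_one
  simp only [hψ, zero_smul, add_zero, zero_mul, one_smul, one_mul, zero_pow, one_pow] at h01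
  have hab : a + v = b := by rw [hv]; abel
  rw [hab] at h01
  linarith [h01]

lemma descent_lower (g : F → ℝ) (G : F → F) (Lg : ℝ)
    (hG : ∀ z, HasGradientAt g (G z) z)
    (hlip : ∀ a b, ‖G a - G b‖ ≤ Lg * ‖a - b‖) (a b : F) :
    g a + ⟪G a, b - a⟫ - Lg / 2 * ‖b - a‖ ^ 2 ≤ g b := by
  have hGneg : ∀ z, HasGradientAt (fun w => -g w) (-G z) z := by
    intro z
    rw [hasGradientAt_iff_hasFDerivAt]
    have := (hasGradientAt_iff_hasFDerivAt.1 (hG z)).neg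
    rw [map_neg]
    exact this
  have hlip' : ∀ a b, ‖(-G a) - (-G b)‖ ≤ Lg * ‖a - b‖ := by
    intro a b
    have := hlip a b
    rw [show (-G a) - (-G b) = -(G a - G b) by abel, norm_neg]
    exact this
  have := descent_upper (fun w => -g w) (fun z => -G z) Lg hGneg hlip' a b
  simp only [inner_neg_left] at this
  linarith
end descent

lemma prox_vi (r : F → ℝ) (hr : ConvexOn ℝ Set.univ r) (c : ℝ) (hc : 0 < c) (p a : F)
    (hmin : IsMinOn (fun z => r z + c * ‖z - p‖ ^ 2) Set.univ a) (z : F) :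
    r a + 2 * c * ⟪a - p, a - z⟫ ≤ r z := by
  have key : ∀ t : ℝ, 0 < t → t ≤ 1 →
      0 ≤ (r z - r a) + 2 * c * ⟪a - p, z - a⟫ + t * (c * ‖z - a‖ ^ 2) := by
    intro t ht ht1
    have hmin' := hmin (Set.mem_univ (a + t • (z - a)))
    simp only [Set.mem_setOf_eq] at hmin'
    have hpt : a + t • (z - a) = (1 - t) • a + t • z := by
      rw [smul_sub, sub_smul, one_smul]; abel
    have hconv := hr.2 (Set.mem_univ a) (Set.mem_univ z)
      (by linarith : (0:ℝ) ≤ 1 - t) ht.le (by ring)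
    simp only [smul_eq_mul] at hconv
    have hexp : ‖a + t • (z - a) - p‖ ^ 2
        = ‖a - p‖ ^ 2 + 2 * (t * ⟪a - p, z - a⟫) + t ^ 2 * ‖z - a‖ ^ 2 := by
      have h1 : a + t • (z - a) - p = (a - p) + t • (z - a) := by abel
      rw [h1, norm_add_sq_real, real_inner_smul_right, norm_smul, Real.norm_eq_abs,
        abs_of_pos ht, mul_pow]
    rw [← hpt] at hconv
    have h2 : r (a + t • (z - a)) ≤ (1 - t) * r a + t * r z := hconv
    have h3 : r a + c * ‖a - p‖ ^ 2 ≤ r (a + t • (z - a)) + c * ‖a + t • (z - a) - p‖ ^ 2 :=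
      hmin'
    rw [hexp] at h3
    nlinarith [sq_nonneg t, norm_nonneg (z - a)]
  have hA : 0 ≤ (r z - r a) + 2 * c * ⟪a - p, z - a⟫ := by
    by_contra h
    push_neg at h
    set A := (r z - r a) + 2 * c * ⟪a - p, z - a⟫ with hAdef
    set B := c * ‖z - a‖ ^ 2 with hB
    have hB0 : 0 ≤ B := by positivity
    have ht0 : 0 < min 1 ((-A) / (2 * (B + 1))) := by
      apply lt_min one_pos
      apply div_pos (by linarith) (by linarith)
    have := key (min 1 ((-A) / (2 * (B + 1)))) ht0 (min_le_left _ _)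
    have hle : min 1 ((-A) / (2 * (B + 1))) ≤ (-A) / (2 * (B + 1)) := min_le_right _ _
    have h5 : min 1 ((-A) / (2 * (B + 1))) * B ≤ (-A) / (2 * (B + 1)) * B :=
      mul_le_mul_of_nonneg_right hle hB0
    have h6 : (-A) / (2 * (B + 1)) * B ≤ (-A) / 2 := by
      rw [div_mul_eq_mul_div, div_le_div_iff₀ (by linarith) two_pos]
      nlinarith
    linarith
  have : ⟪a - p, z - a⟫ = - ⟪a - p, a - z⟫ := by
    rw [← inner_neg_right]; congr 1; abel
  rw [this] at hA
  linarith

lemma prox_nonexp (r : F → ℝ) (hr : ConvexOn ℝ Set.univ r) (c : ℝ) (hc : 0 < c)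
    (p1 p2 a1 a2 : F)
    (h1 : IsMinOn (fun z => r z + c * ‖z - p1‖ ^ 2) Set.univ a1)
    (h2 : IsMinOn (fun z => r z + c * ‖z - p2‖ ^ 2) Set.univ a2) :
    ‖a1 - a2‖ ≤ ‖p1 - p2‖ := by
  have v1 := prox_vi r hr c hc p1 a1 h1 a2
  have v2 := prox_vi r hr c hc p2 a2 h2 a1
  have hsum : ⟪a1 - p1, a1 - a2⟫ + ⟪a2 - p2, a2 - a1⟫ ≤ 0 := by nlinarith
  have hkey : ‖a1 - a2‖ ^ 2 ≤ ⟪p1 - p2, a1 - a2⟫ := by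
    have e1 : ⟪a2 - p2, a2 - a1⟫ = ⟪p2 - a2, a1 - a2⟫ := by
      rw [show a2 - p2 = -(p2 - a2) by abel, show a2 - a1 = -(a1 - a2) by abel,
        inner_neg_neg]
    rw [e1] at hsum
    have e2 : ⟪a1 - p1, a1 - a2⟫ + ⟪p2 - a2, a1 - a2⟫ = ⟪(a1 - a2) - (p1 - p2), a1 - a2⟫ := by
      rw [← inner_add_left]; congr 1; abel
    rw [e2, inner_sub_left, real_inner_self_eq_norm_sq] at hsum
    linarith
  have hcs : ⟪p1 - p2, a1 - a2⟫ ≤ ‖p1 - p2‖ * ‖a1 - a2‖ := real_inner_le_norm _ _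
  rcases eq_or_lt_of_le (norm_nonneg (a1 - a2)) with h | h
  · rw [← h]; exact norm_nonneg _
  · nlinarith

lemma jensen_norm_sq {m : ℕ} (w : Fin m → ℝ) (hw : ∀ k, 0 ≤ w k) (hw1 : ∑ k, w k = 1)
    (u : Fin m → F) : ‖∑ k, w k • u k‖ ^ 2 ≤ ∑ k, w k * ‖u k‖ ^ 2 := by
  have hexp : ‖∑ k, w k • u k‖ ^ 2 = ∑ k, ∑ l, w k * w l * ⟪u k, u l⟫ := by
    rw [← real_inner_self_eq_norm_sq, sum_inner]
    congr 1; ext k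
    rw [real_inner_smul_left, inner_sum, Finset.mul_sum]
    congr 1; ext l
    rw [real_inner_smul_right]; ring
  rw [hexp]
  have hle : ∑ k, ∑ l, w k * w l * ⟪u k, u l⟫
      ≤ ∑ k, ∑ l, w k * w l * ((‖u k‖ ^ 2 + ‖u l‖ ^ 2) / 2) := by
    apply Finset.sum_le_sum; intro k _
    apply Finset.sum_le_sum; intro l _
    have h1 : ⟪u k, u l⟫ ≤ ‖u k‖ * ‖u l‖ := real_inner_le_norm _ _
    have h2 : ‖u k‖ * ‖u l‖ ≤ (‖u k‖ ^ 2 + ‖u l‖ ^ 2) / 2 := by nlinarith [sq_nonneg (‖u k‖ - ‖u l‖)]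
    nlinarith [mul_nonneg (hw k) (hw l)]
  refine hle.trans (le_of_eq ?_)
  set S := ∑ l, w l * ‖u l‖ ^ 2 with hS
  have hk : ∀ k, ∑ l, w k * w l * ((‖u k‖ ^ 2 + ‖u l‖ ^ 2) / 2)
      = w k * ‖u k‖ ^ 2 / 2 + w k * S / 2 := by
    intro k
    have e : ∑ l, w k * w l * ((‖u k‖ ^ 2 + ‖u l‖ ^ 2) / 2)
        = w k * ‖u k‖ ^ 2 / 2 * (∑ l, w l) + w k / 2 * ∑ l, w l * ‖u l‖ ^ 2 := by
      rw [Finset.mul_sum, Finset.mul_sum, ← Finset.sum_add_distrib]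
      exact Finset.sum_congr rfl (fun l _ => by ring)
    rw [e, hw1, ← hS]; ring
  calc ∑ k, ∑ l, w k * w l * ((‖u k‖ ^ 2 + ‖u l‖ ^ 2) / 2)
      = ∑ k, (w k * ‖u k‖ ^ 2 / 2 + w k * S / 2) := Finset.sum_congr rfl (fun k _ => hk k)
    _ = (∑ k, w k * ‖u k‖ ^ 2) / 2 + (∑ k, w k) * S / 2 := by
        rw [Finset.sum_add_distrib, ← Finset.sum_div, ← Finset.sum_div, ← Finset.sum_mul]
    _ = S := by rw [hw1, ← hS]; ring

set_option maxHeartbeats 1000000 in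
theorem stmt16 (m d : ℕ) (hm : 1 ≤ m) (hd : 1 ≤ d)
    (f : Fin m → EuclideanSpace ℝ (Fin d) → ℝ) (Lf : Fin m → ℝ)
    (hdiff : ∀ i, Differentiable ℝ (f i))
    (hlip : ∀ i, ∀ a b : EuclideanSpace ℝ (Fin d),
      ‖gradient (f i) a - gradient (f i) b‖ ≤ Lf i * ‖a - b‖)
    (L : ℝ) (hL : L = (∑ i, Lf i) / m)
    (r : EuclideanSpace ℝ (Fin d) → ℝ) (hr : ConvexOn ℝ Set.univ r)
    (u : EuclideanSpace ℝ (Fin d) → ℝ) (hu : u = fun z => (∑ i, f i z) / m + r z)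
    (W : Matrix (Fin m) (Fin m) ℝ)
    (hWnn : ∀ i j, 0 ≤ W i j)
    (hWrow : ∀ i, ∑ j, W i j = 1) (hWcol : ∀ j, ∑ i, W i j = 1)
    (wmx : ℝ)
    (hwmx : wmx = ∑ i, Finset.univ.sup' ⟨⟨0, hm⟩, Finset.mem_univ _⟩ (fun j => W i j))
    (α ξ : ℝ) (hα : 0 < α) (hξ : 0 < ξ)
    (x y xh xp : Fin m → EuclideanSpace ℝ (Fin d))
    (hprox : ∀ i, IsMinOn
      (fun z => r z + (1 / (2 * α)) * ‖z - (x i - α • y i)‖ ^ 2) Set.univ (xh i))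
    (hxp : ∀ i, xp i = ∑ j, W i j • xh j) :
    ∑ i, u (xp i) ≤
      ∑ i, u (x i) - (1 / α - L / 2 - ξ / 2) * ∑ i, ‖xh i - x i‖ ^ 2
      + (1 / (2 * ξ)) * ∑ i, ‖gradient (fun z => (∑ j, f j z) / m) (x i) - y i‖ ^ 2
      + 4 * L * wmx * (∑ i, ‖x i - (m : ℝ)⁻¹ • ∑ j, x j‖ ^ 2
          + α ^ 2 * ∑ i, ‖y i - (m : ℝ)⁻¹ • ∑ j, y j‖ ^ 2) := by
  have hm0 : (0:ℝ) < m := by exact_mod_cast Nat.lt_of_lt_of_le Nat.zero_lt_one hm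
  set g : EuclideanSpace ℝ (Fin d) → ℝ := fun z => (∑ j, f j z) / m with hgdef
  set G : EuclideanSpace ℝ (Fin d) → EuclideanSpace ℝ (Fin d) :=
    fun z => (m:ℝ)⁻¹ • ∑ j, gradient (f j) z with hGdef
  -- gradient facts
  have hGg : ∀ z, HasGradientAt g (G z) z := by
    intro z
    rw [hasGradientAt_iff_hasFDerivAt]
    have h2 : HasFDerivAt (fun w => ∑ j, f j w) (∑ j, fderiv ℝ (f j) z) z :=
      HasFDerivAt.fun_sum (fun j _ => (hdiff j z).hasFDerivAt)
    have h3 : HasFDerivAt g ((m:ℝ)⁻¹ • ∑ j, fderiv ℝ (f j) z) z := by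
      have he : g = fun w => (m:ℝ)⁻¹ * ∑ j, f j w := by
        funext w; simp only [hgdef, div_eq_inv_mul]
      rw [he]
      exact h2.const_mul _
    have he2 : (InnerProductSpace.toDual ℝ (EuclideanSpace ℝ (Fin d))) (G z)
        = (m:ℝ)⁻¹ • ∑ j, fderiv ℝ (f j) z := by
      rw [hGdef]
      simp only [map_smul, map_sum, gradient, LinearIsometryEquiv.apply_symm_apply]
    rw [he2]
    exact h3
  have hgrad_eq : ∀ z, gradient g z = G z := fun z => (hGg z).gradient
  have hGlip : ∀ a b, ‖G a - G b‖ ≤ L * ‖a - b‖ := by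
    intro a b
    have hdG : G a - G b = (m:ℝ)⁻¹ • ∑ j, (gradient (f j) a - gradient (f j) b) := by
      rw [hGdef, ← smul_sub, Finset.sum_sub_distrib]
    rw [hdG, norm_smul, Real.norm_eq_abs, abs_of_pos (by positivity : (0:ℝ) < (m:ℝ)⁻¹)]
    have h1 : ‖∑ j, (gradient (f j) a - gradient (f j) b)‖ ≤ (∑ j, Lf j) * ‖a - b‖ := by
      calc ‖∑ j, (gradient (f j) a - gradient (f j) b)‖
          ≤ ∑ j, ‖gradient (f j) a - gradient (f j) b‖ := norm_sum_le _ _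
        _ ≤ ∑ j, Lf j * ‖a - b‖ := Finset.sum_le_sum (fun j _ => hlip j a b)
        _ = (∑ j, Lf j) * ‖a - b‖ := by rw [Finset.sum_mul]
    calc (m:ℝ)⁻¹ * ‖∑ j, (gradient (f j) a - gradient (f j) b)‖
        ≤ (m:ℝ)⁻¹ * ((∑ j, Lf j) * ‖a - b‖) :=
          mul_le_mul_of_nonneg_left h1 (by positivity)
      _ = L * ‖a - b‖ := by rw [hL]; field_simp
  -- L nonneg
  have hLf0 : ∀ i, 0 ≤ Lf i := by
    intro i
    have h := hlip i (EuclideanSpace.single ⟨0, hd⟩ (1:ℝ)) 0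
    rw [sub_zero, EuclideanSpace.norm_single] at h
    simp only [norm_one, mul_one] at h
    exact le_trans (norm_nonneg _) h
  have hL0 : 0 ≤ L := by
    rw [hL]
    exact div_nonneg (Finset.sum_nonneg (fun i _ => hLf0 i)) (le_of_lt hm0)
  -- wmx ≥ 1
  have hwmx1 : 1 ≤ wmx := by
    have hsup : ∀ i : Fin m, (1:ℝ)/m ≤
        Finset.univ.sup' ⟨⟨0, hm⟩, Finset.mem_univ _⟩ (fun j => W i j) := by
      intro i
      have h2 : ∑ j, W i j ≤ ∑ _j : Fin m,
          Finset.univ.sup' ⟨⟨0, hm⟩, Finset.mem_univ _⟩ (fun j => W i j) :=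
        Finset.sum_le_sum (fun j _ => Finset.le_sup' _ (Finset.mem_univ j))
      rw [hWrow i, Finset.sum_const, card_univ, Fintype.card_fin, nsmul_eq_mul] at h2
      rw [div_le_iff₀ hm0]
      linarith
    calc (1:ℝ) = ∑ _i : Fin m, (1:ℝ)/m := by
          rw [Finset.sum_const, card_univ, Fintype.card_fin, nsmul_eq_mul]
          field_simp
      _ ≤ wmx := by rw [hwmx]; exact Finset.sum_le_sum (fun i _ => hsup i)
  have hu_eq : ∀ z, u z = g z + r z := by intro z; rw [hu]
  have hc : (0:ℝ) < 1 / (2 * α) := by positivity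
  -- Step A
  have keyA : ∀ i, u (xh i) ≤ u (x i) - (1/α - L/2 - ξ/2) * ‖xh i - x i‖^2
      + (1/(2*ξ)) * ‖G (x i) - y i‖^2 := by
    intro i
    have hg_up := descent_upper g G L hGg hGlip (x i) (xh i)
    have hrv := prox_vi r hr (1/(2*α)) hc (x i - α • y i) (xh i) (hprox i) (x i)
    have hinner : ⟪xh i - (x i - α • y i), xh i - x i⟫
        = ‖xh i - x i‖^2 + α * ⟪y i, xh i - x i⟫ := by
      rw [show xh i - (x i - α • y i) = (xh i - x i) + α • y i by abel,
        inner_add_left, real_inner_smul_left, real_inner_self_eq_norm_sq]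
    rw [hinner] at hrv
    have hrv' : r (xh i) + (1/α) * ‖xh i - x i‖^2 + ⟪y i, xh i - x i⟫ ≤ r (x i) := by
      have he : 2 * (1/(2*α)) * (‖xh i - x i‖^2 + α * ⟪y i, xh i - x i⟫)
          = (1/α) * ‖xh i - x i‖^2 + ⟪y i, xh i - x i⟫ := by
        field_simp
      linarith [hrv, he.symm.le, he.le]
    have hyoung : ⟪G (x i), xh i - x i⟫ - ⟪y i, xh i - x i⟫
        ≤ (1/(2*ξ)) * ‖G (x i) - y i‖^2 + (ξ/2) * ‖xh i - x i‖^2 := by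
      rw [← inner_sub_left]
      have h1 : ⟪G (x i) - y i, xh i - x i⟫ ≤ ‖G (x i) - y i‖ * ‖xh i - x i‖ :=
        real_inner_le_norm _ _
      have h2 : ξ * (‖G (x i) - y i‖ * ‖xh i - x i‖)
          ≤ ξ * ((1/(2*ξ)) * ‖G (x i) - y i‖^2 + (ξ/2) * ‖xh i - x i‖^2) := by
        have hx2 : 2 * ξ * ((1/(2*ξ)) * ‖G (x i) - y i‖^2) = ‖G (x i) - y i‖^2 := by
          field_simp
        nlinarith [sq_nonneg (‖G (x i) - y i‖ - ξ * ‖xh i - x i‖)]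
      nlinarith
    rw [hu_eq, hu_eq]
    linarith
  have stepA : ∑ i, u (xh i) ≤ ∑ i, u (x i) - (1/α - L/2 - ξ/2) * ∑ i, ‖xh i - x i‖^2
      + (1/(2*ξ)) * ∑ i, ‖G (x i) - y i‖^2 := by
    calc ∑ i, u (xh i)
        ≤ ∑ i, (u (x i) - (1/α - L/2 - ξ/2) * ‖xh i - x i‖^2
            + (1/(2*ξ)) * ‖G (x i) - y i‖^2) := Finset.sum_le_sum (fun i _ => keyA i)
      _ = ∑ i, u (x i) - (1/α - L/2 - ξ/2) * ∑ i, ‖xh i - x i‖^2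
          + (1/(2*ξ)) * ∑ i, ‖G (x i) - y i‖^2 := by
          rw [Finset.sum_add_distrib, Finset.sum_sub_distrib, ← Finset.mul_sum,
            ← Finset.mul_sum]
  -- Step B: prox aggregation
  have hzero : ∀ i, ∑ j, W i j • (xh j - xp i) = 0 := by
    intro i
    simp only [smul_sub]
    rw [Finset.sum_sub_distrib, ← Finset.sum_smul, hWrow i, one_smul, hxp i, sub_self]
  have hrpart : ∑ i, r (xp i) ≤ ∑ i, r (xh i) := by
    have per : ∀ i, r (xp i) ≤ ∑ j, W i j * r (xh j) := by
      intro i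
      have h := hr.map_sum_le (fun j _ => hWnn i j) (hWrow i) (fun j _ => Set.mem_univ (xh j))
      rw [hxp i]
      simpa [smul_eq_mul] using h
    calc ∑ i, r (xp i) ≤ ∑ i, ∑ j, W i j * r (xh j) := Finset.sum_le_sum (fun i _ => per i)
      _ = ∑ j, ∑ i, W i j * r (xh j) := Finset.sum_comm
      _ = ∑ j, r (xh j) := Finset.sum_congr rfl (fun j _ => by
          rw [← Finset.sum_mul, hWcol j, one_mul])
  have hgpart : ∀ i, g (xp i) ≤ ∑ j, W i j * g (xh j)
      + L/2 * ∑ j, W i j * ‖xh j - xp i‖^2 := by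
    intro i
    have per : ∀ j, W i j * (g (xp i) + ⟪G (xp i), xh j - xp i⟫ - L/2 * ‖xh j - xp i‖^2)
        ≤ W i j * g (xh j) := fun j =>
      mul_le_mul_of_nonneg_left (by
        have := descent_lower g G L hGg hGlip (xp i) (xh j); linarith) (hWnn i j)
    have hsum := Finset.sum_le_sum (fun j (_ : j ∈ Finset.univ) => per j)
    have hz : ∑ j, W i j * ⟪G (xp i), xh j - xp i⟫ = 0 := by
      have he : ∑ j, W i j * ⟪G (xp i), xh j - xp i⟫
          = ⟪G (xp i), ∑ j, W i j • (xh j - xp i)⟫ := by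
        rw [inner_sum]
        exact Finset.sum_congr rfl (fun j _ => (real_inner_smul_right _ _ _).symm)
      rw [he, hzero i, inner_zero_right]
    have hL1 : ∑ j, W i j * (g (xp i) + ⟪G (xp i), xh j - xp i⟫ - L/2 * ‖xh j - xp i‖^2)
        = g (xp i) - L/2 * ∑ j, W i j * ‖xh j - xp i‖^2 := by
      calc ∑ j, W i j * (g (xp i) + ⟪G (xp i), xh j - xp i⟫ - L/2 * ‖xh j - xp i‖^2)
          = ∑ j, (W i j * g (xp i) + W i j * ⟪G (xp i), xh j - xp i⟫
              - L/2 * (W i j * ‖xh j - xp i‖^2)) :=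
            Finset.sum_congr rfl (fun j _ => by ring)
        _ = (∑ j, W i j) * g (xp i) + (∑ j, W i j * ⟪G (xp i), xh j - xp i⟫)
            - L/2 * ∑ j, W i j * ‖xh j - xp i‖^2 := by
            rw [Finset.sum_sub_distrib, Finset.sum_add_distrib, ← Finset.sum_mul,
              ← Finset.mul_sum]
        _ = g (xp i) - L/2 * ∑ j, W i j * ‖xh j - xp i‖^2 := by
            rw [hWrow i, one_mul, hz, add_zero]
    rw [hL1] at hsum
    linarith
  have hgsum : ∑ i, g (xp i) ≤ ∑ i, g (xh i)
      + L/2 * ∑ i, ∑ j, W i j * ‖xh j - xp i‖^2 := by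
    calc ∑ i, g (xp i)
        ≤ ∑ i, (∑ j, W i j * g (xh j) + L/2 * ∑ j, W i j * ‖xh j - xp i‖^2) :=
          Finset.sum_le_sum (fun i _ => hgpart i)
      _ = (∑ i, ∑ j, W i j * g (xh j)) + L/2 * ∑ i, ∑ j, W i j * ‖xh j - xp i‖^2 := by
          rw [Finset.sum_add_distrib, ← Finset.mul_sum]
      _ = (∑ j, g (xh j)) + L/2 * ∑ i, ∑ j, W i j * ‖xh j - xp i‖^2 := by
          congr 1
          rw [Finset.sum_comm]
          exact Finset.sum_congr rfl (fun j _ => by rw [← Finset.sum_mul, hWcol j, one_mul])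
  -- Step C: bound the consensus term
  set xb : EuclideanSpace ℝ (Fin d) := (m:ℝ)⁻¹ • ∑ j, x j with hxb
  set yb : EuclideanSpace ℝ (Fin d) := (m:ℝ)⁻¹ • ∑ j, y j with hyb
  set q : Fin m → ℝ := fun k => ‖(x k - α • y k) - (xb - α • yb)‖^2 with hq
  have hT1 : ∀ i j, ‖xh j - xp i‖^2 ≤ ∑ k, W i k * ‖xh j - xh k‖^2 := by
    intro i j
    have hrep : xh j - xp i = ∑ k, W i k • (xh j - xh k) := by
      simp only [smul_sub]
      rw [Finset.sum_sub_distrib, ← Finset.sum_smul, hWrow i, one_smul, hxp i]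
    rw [hrep]
    exact jensen_norm_sq (W i) (hWnn i) (hWrow i) (fun k => xh j - xh k)
  have hpair : ∀ j k, ‖xh j - xh k‖^2 ≤ 2 * q j + 2 * q k := by
    intro j k
    have h1 : ‖xh j - xh k‖ ≤ ‖(x j - α • y j) - (x k - α • y k)‖ :=
      prox_nonexp r hr (1/(2*α)) hc _ _ _ _ (hprox j) (hprox k)
    have h2 : ‖(x j - α • y j) - (x k - α • y k)‖
        ≤ ‖(x j - α • y j) - (xb - α • yb)‖ + ‖(x k - α • y k) - (xb - α • yb)‖ := by
      rw [show (x j - α • y j) - (x k - α • y k)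
          = ((x j - α • y j) - (xb - α • yb)) - ((x k - α • y k) - (xb - α • yb)) by abel]
      exact norm_sub_le _ _
    have hqj : q j = ‖(x j - α • y j) - (xb - α • yb)‖^2 := rfl
    have hqk : q k = ‖(x k - α • y k) - (xb - α • yb)‖^2 := rfl
    rw [hqj, hqk]
    nlinarith [norm_nonneg (xh j - xh k), norm_nonneg ((x j - α • y j) - (xb - α • yb)),
      norm_nonneg ((x k - α • y k) - (xb - α • yb)),
      sq_nonneg (‖(x j - α • y j) - (xb - α • yb)‖ - ‖(x k - α • y k) - (xb - α • yb)‖)]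
  have hinner2 : ∀ i j, ∑ k, W i k * ‖xh j - xh k‖^2
      ≤ 2 * q j + 2 * ∑ k, W i k * q k := by
    intro i j
    calc ∑ k, W i k * ‖xh j - xh k‖^2
        ≤ ∑ k, W i k * (2 * q j + 2 * q k) :=
          Finset.sum_le_sum (fun k _ =>
            mul_le_mul_of_nonneg_left (hpair j k) (hWnn i k))
      _ = (∑ k, W i k) * (2 * q j) + 2 * ∑ k, W i k * q k := by
          rw [Finset.sum_mul, Finset.mul_sum, ← Finset.sum_add_distrib]
          exact Finset.sum_congr rfl (fun k _ => by ring)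
      _ = 2 * q j + 2 * ∑ k, W i k * q k := by rw [hWrow i, one_mul]
  have hTfinal : ∑ i, ∑ j, W i j * ‖xh j - xp i‖^2 ≤ 4 * ∑ k, q k := by
    have hQ : ∀ i, ∑ j, W i j * ‖xh j - xp i‖^2
        ≤ 2 * ∑ j, W i j * q j + 2 * ∑ k, W i k * q k := by
      intro i
      calc ∑ j, W i j * ‖xh j - xp i‖^2
          ≤ ∑ j, W i j * (2 * q j + 2 * ∑ k, W i k * q k) :=
            Finset.sum_le_sum (fun j _ => mul_le_mul_of_nonneg_left
              ((hT1 i j).trans (hinner2 i j)) (hWnn i j))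
        _ = 2 * ∑ j, W i j * q j + (∑ j, W i j) * (2 * ∑ k, W i k * q k) := by
            rw [Finset.sum_mul, Finset.mul_sum, ← Finset.sum_add_distrib]
            exact Finset.sum_congr rfl (fun j _ => by ring)
        _ = 2 * ∑ j, W i j * q j + 2 * ∑ k, W i k * q k := by rw [hWrow i, one_mul]
    have hcolq : ∑ i, ∑ j, W i j * q j = ∑ j, q j := by
      rw [Finset.sum_comm]
      exact Finset.sum_congr rfl (fun j _ => by rw [← Finset.sum_mul, hWcol j, one_mul])
    calc ∑ i, ∑ j, W i j * ‖xh j - xp i‖^2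
        ≤ ∑ i, (2 * ∑ j, W i j * q j + 2 * ∑ k, W i k * q k) :=
          Finset.sum_le_sum (fun i _ => hQ i)
      _ = 4 * ∑ k, q k := by
          rw [Finset.sum_add_distrib, ← Finset.mul_sum, hcolq]
          ring
  have hqbound : ∀ k, q k ≤ 2 * ‖x k - xb‖^2 + 2 * α^2 * ‖y k - yb‖^2 := by
    intro k
    have he : (x k - α • y k) - (xb - α • yb) = (x k - xb) - α • (y k - yb) := by
      rw [smul_sub]; abel
    have h1 : ‖(x k - α • y k) - (xb - α • yb)‖ ≤ ‖x k - xb‖ + α * ‖y k - yb‖ := by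
      rw [he]
      calc ‖(x k - xb) - α • (y k - yb)‖ ≤ ‖x k - xb‖ + ‖α • (y k - yb)‖ := norm_sub_le _ _
        _ = ‖x k - xb‖ + α * ‖y k - yb‖ := by
            rw [norm_smul, Real.norm_eq_abs, abs_of_pos hα]
    have hqk : q k = ‖(x k - α • y k) - (xb - α • yb)‖^2 := rfl
    rw [hqk]
    nlinarith [norm_nonneg ((x k - α • y k) - (xb - α • yb)), norm_nonneg (x k - xb),
      norm_nonneg (y k - yb), mul_nonneg hα.le (norm_nonneg (y k - yb)),
      sq_nonneg (‖x k - xb‖ - α * ‖y k - yb‖)]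
  have hV : ∑ k, q k ≤ 2 * ((∑ k, ‖x k - xb‖^2) + α^2 * ∑ k, ‖y k - yb‖^2) := by
    calc ∑ k, q k ≤ ∑ k, (2 * ‖x k - xb‖^2 + 2 * α^2 * ‖y k - yb‖^2) :=
          Finset.sum_le_sum (fun k _ => hqbound k)
      _ = 2 * ((∑ k, ‖x k - xb‖^2) + α^2 * ∑ k, ‖y k - yb‖^2) := by
          rw [Finset.sum_add_distrib, ← Finset.mul_sum, ← Finset.mul_sum]
          ring
  -- assemble
  have hXY0 : 0 ≤ (∑ k, ‖x k - xb‖^2) + α^2 * ∑ k, ‖y k - yb‖^2 := by positivity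
  have hq0 : 0 ≤ ∑ k, q k := Finset.sum_nonneg (fun k _ => by have : q k = ‖(x k - α • y k) - (xb - α • yb)‖^2 := rfl; rw [this]; positivity)
  have hT0 : L/2 * ∑ i, ∑ j, W i j * ‖xh j - xp i‖^2
      ≤ 4 * L * wmx * ((∑ k, ‖x k - xb‖^2) + α^2 * ∑ k, ‖y k - yb‖^2) := by
    have h1 : L/2 * ∑ i, ∑ j, W i j * ‖xh j - xp i‖^2 ≤ L/2 * (4 * ∑ k, q k) :=
      mul_le_mul_of_nonneg_left hTfinal (by linarith)
    have h2 : L/2 * (4 * ∑ k, q k)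
        ≤ L/2 * (4 * (2 * ((∑ k, ‖x k - xb‖^2) + α^2 * ∑ k, ‖y k - yb‖^2))) := by
      apply mul_le_mul_of_nonneg_left _ (by linarith)
      linarith
    nlinarith [mul_nonneg hL0 hXY0]
  have hsumu : ∑ i, u (xp i) ≤ ∑ i, u (xh i)
      + 4 * L * wmx * ((∑ k, ‖x k - xb‖^2) + α^2 * ∑ k, ‖y k - yb‖^2) := by
    have e1 : ∑ i, u (xp i) = ∑ i, g (xp i) + ∑ i, r (xp i) := by
      simp only [hu_eq]; rw [Finset.sum_add_distrib]
    have e2 : ∑ i, u (xh i) = ∑ i, g (xh i) + ∑ i, r (xh i) := by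
      simp only [hu_eq]; rw [Finset.sum_add_distrib]
    rw [e1, e2]
    linarith [hgsum, hrpart, hT0]
  simp only [hgrad_eq]
  linarith [stepA, hsumu]
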